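/- Let n ≥ 2 and let v : ℝⁿ → ℝ be a positive C² function satisfying the Allen-Cahn equation Δv + v - v³ = 0 on all of ℝⁿ, where Δ is the standard Euclidean Laplacian. Then v ≡ 1. -/

import Mathlib

open Real

/-- The standard Euclidean Laplacian `Δ v = ∑ᵢ ∂²v/∂xᵢ²` on `ℝⁿ`. -/
noncomputable def euclLaplacian {n : ℕ} (v : EuclideanSpace ℝ (Fin n) → ℝ)
    (x : EuclideanSpace ℝ (Fin n)) : ℝ :=
  ∑ i : Fin n,
    fderiv ℝ (fun y => fderiv ℝ v y (EuclideanSpace.single i 1)) x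
      (EuclideanSpace.single i 1)

open Filter Topology

/-- 1D second derivative test at a local min at `0`. -/
lemma sdtest_min {g h : ℝ → ℝ} {c : ℝ}
    (hmin : IsLocalMin g 0)
    (hgh : ∀ᶠ t in 𝓝 (0:ℝ), HasDerivAt g (h t) t)
    (hh : HasDerivAt h c 0) : 0 ≤ c := by
  by_contra hc
  push_neg at hc
  have h0 : h 0 = 0 := by
    have h1 : deriv g 0 = h 0 := hgh.self_of_nhds.deriv
    have h2 : deriv g 0 = 0 := hmin.deriv_eq_zero
    linarith [h1, h2]
  have hs : ∀ᶠ t in 𝓝[≠] (0:ℝ), slope h 0 t < c / 2 := by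
    have := hasDerivAt_iff_tendsto_slope.1 hh
    exact this (Iio_mem_nhds (by linarith))
  have hneg : ∀ᶠ t in 𝓝 (0:ℝ), t ∈ Set.Iio (0:ℝ) → 0 < h t := by
    have := eventually_nhdsWithin_iff.1 (hs.filter_mono (nhdsWithin_mono _ (by
      intro t ht; exact fun h' => absurd h' (ne_of_lt ht))))
    filter_upwards [this] with t ht ht0
    have hslope := ht ht0
    rw [slope_def_field] at hslope
    have hdiv : (h t - h 0) / (t - 0) < c/2 := hslope
    rw [h0, sub_zero, sub_zero] at hdiv
    have htlt : t < 0 := ht0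
    have h3 : c/2 * t < h t := (div_lt_iff_of_neg htlt).1 hdiv
    have h4 : 0 < c/2 * t := mul_pos_of_neg_of_neg (by linarith) htlt
    linarith
  obtain ⟨δ, hδpos, hδ⟩ := Metric.eventually_nhds_iff.1
    ((hgh.and hneg).and (hmin : ∀ᶠ t in 𝓝 (0:ℝ), g 0 ≤ g t))
  have habs : ∀ t ∈ Set.Icc (-(δ/2)) 0, dist t 0 < δ := by
    intro t ht
    rw [Real.dist_eq, sub_zero]
    rcases ht with ⟨h1, h2⟩
    rw [abs_lt]
    constructor <;> linarith
  have hcont : ContinuousOn g (Set.Icc (-(δ/2)) 0) := by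
    intro t ht
    exact ((hδ (habs t ht)).1.1.continuousAt).continuousWithinAt
  have hmono : StrictMonoOn g (Set.Icc (-(δ/2)) 0) := by
    apply strictMonoOn_of_deriv_pos (convex_Icc _ _) hcont
    intro t ht
    rw [interior_Icc] at ht
    have hd : dist t 0 < δ := habs t ⟨le_of_lt ht.1, le_of_lt ht.2⟩
    have h5 := (hδ hd).1
    rw [h5.1.deriv]
    exact h5.2 ht.2
  have hm1 : (-(δ/2)) ∈ Set.Icc (-(δ/2)) (0:ℝ) := ⟨le_refl _, by linarith⟩
  have hm2 : (0:ℝ) ∈ Set.Icc (-(δ/2)) (0:ℝ) := ⟨by linarith, le_refl _⟩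
  have h1 : g (-(δ/2)) < g 0 := hmono hm1 hm2 (by linarith)
  have h2 : g 0 ≤ g (-(δ/2)) := (hδ (habs _ hm1)).2
  linarith

lemma sdtest_max {g h : ℝ → ℝ} {c : ℝ}
    (hmax : IsLocalMax g 0)
    (hgh : ∀ᶠ t in 𝓝 (0:ℝ), HasDerivAt g (h t) t)
    (hh : HasDerivAt h c 0) : c ≤ 0 := by
  have := sdtest_min (g := fun t => -g t) (h := fun t => -h t) (c := -c) hmax.neg
    (by filter_upwards [hgh] with t ht; exact ht.neg) hh.neg
  linarith

section dir

variable {n : ℕ} {f : EuclideanSpace ℝ (Fin n) → ℝ}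
  {x₀ : EuclideanSpace ℝ (Fin n)} {s : Set (EuclideanSpace ℝ (Fin n))}
  {D : EuclideanSpace ℝ (Fin n) → (EuclideanSpace ℝ (Fin n) →L[ℝ] ℝ)}

lemma sdtest_min' : True := trivial

/-- directional second derivative nonneg at an interior local min -/
lemma dir2_nonneg (hs : IsOpen s) (hx : x₀ ∈ s)
    (hD : ∀ y ∈ s, HasFDerivAt f (D y) y)
    {w : EuclideanSpace ℝ (Fin n)} {D₂ : EuclideanSpace ℝ (Fin n) →L[ℝ] ℝ}
    (hD₂ : HasFDerivAt (fun y => D y w) D₂ x₀)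
    (hmin : IsLocalMin f x₀) : 0 ≤ D₂ w := by
  set L : ℝ → EuclideanSpace ℝ (Fin n) := fun τ => x₀ + τ • w with hL
  have hLc : Continuous L := by continuity
  have hL0 : L 0 = x₀ := by simp [hL]
  have hLd : ∀ τ : ℝ, HasDerivAt L w τ := by
    intro τ
    simpa [hL] using ((hasDerivAt_id τ).smul_const w).const_add x₀
  have hmem : ∀ᶠ τ in 𝓝 (0:ℝ), L τ ∈ s := by
    have : Tendsto L (𝓝 0) (𝓝 x₀) := by
      rw [← hL0]; exact hLc.continuousAt
    exact this.eventually_mem (hs.mem_nhds hx)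
  have hgh : ∀ᶠ τ in 𝓝 (0:ℝ), HasDerivAt (fun τ => f (L τ)) (D (L τ) w) τ := by
    filter_upwards [hmem] with τ hτ
    exact HasFDerivAt.comp_hasDerivAt (l := f) (f := L) τ (hD (L τ) hτ) (hLd τ)
  have hh : HasDerivAt (fun τ => D (L τ) w) (D₂ w) 0 :=
    HasFDerivAt.comp_hasDerivAt_of_eq (l := fun y => D y w) (f := L) 0 hD₂ (hLd 0) hL0.symm
  have hgmin : IsLocalMin (fun τ => f (L τ)) 0 := by
    have ht : Tendsto L (𝓝 0) (𝓝 x₀) := by rw [← hL0]; exact hLc.continuousAt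
    have := ht.eventually (hmin : ∀ᶠ x in 𝓝 x₀, f x₀ ≤ f x)
    simpa [IsLocalMin, IsMinFilter, hL0] using this
  exact sdtest_min hgmin hgh hh

lemma dir2_nonpos (hs : IsOpen s) (hx : x₀ ∈ s)
    (hD : ∀ y ∈ s, HasFDerivAt f (D y) y)
    {w : EuclideanSpace ℝ (Fin n)} {D₂ : EuclideanSpace ℝ (Fin n) →L[ℝ] ℝ}
    (hD₂ : HasFDerivAt (fun y => D y w) D₂ x₀)
    (hmax : IsLocalMax f x₀) : D₂ w ≤ 0 := by
  set L : ℝ → EuclideanSpace ℝ (Fin n) := fun τ => x₀ + τ • w with hL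
  have hLc : Continuous L := by continuity
  have hL0 : L 0 = x₀ := by simp [hL]
  have hLd : ∀ τ : ℝ, HasDerivAt L w τ := by
    intro τ
    simpa [hL] using ((hasDerivAt_id τ).smul_const w).const_add x₀
  have hmem : ∀ᶠ τ in 𝓝 (0:ℝ), L τ ∈ s := by
    have : Tendsto L (𝓝 0) (𝓝 x₀) := by
      rw [← hL0]; exact hLc.continuousAt
    exact this.eventually_mem (hs.mem_nhds hx)
  have hgh : ∀ᶠ τ in 𝓝 (0:ℝ), HasDerivAt (fun τ => f (L τ)) (D (L τ) w) τ := by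
    filter_upwards [hmem] with τ hτ
    exact HasFDerivAt.comp_hasDerivAt (l := f) (f := L) τ (hD (L τ) hτ) (hLd τ)
  have hh : HasDerivAt (fun τ => D (L τ) w) (D₂ w) 0 :=
    HasFDerivAt.comp_hasDerivAt_of_eq (l := fun y => D y w) (f := L) 0 hD₂ (hLd 0) hL0.symm
  have hgmax : IsLocalMax (fun τ => f (L τ)) 0 := by
    have ht : Tendsto L (𝓝 0) (𝓝 x₀) := by rw [← hL0]; exact hLc.continuousAt
    have := ht.eventually (hmax : ∀ᶠ x in 𝓝 x₀, f x ≤ f x₀)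
    simpa [IsLocalMax, IsMaxFilter, hL0] using this
  exact sdtest_max hgmax hgh hh

/-- Laplacian formula from derivative data -/
lemma euclLaplacian_eq (hs : IsOpen s) (hx : x₀ ∈ s)
    (hD : ∀ y ∈ s, HasFDerivAt f (D y) y)
    {D₂ : Fin n → (EuclideanSpace ℝ (Fin n) →L[ℝ] ℝ)}
    (hD₂ : ∀ i, HasFDerivAt (fun y => D y (EuclideanSpace.single i 1)) (D₂ i) x₀) :
    euclLaplacian f x₀ = ∑ i, D₂ i (EuclideanSpace.single i 1) := by
  unfold euclLaplacian
  apply Finset.sum_congr rfl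
  intro i _
  have hev : (fun y => fderiv ℝ f y (EuclideanSpace.single i 1))
      =ᶠ[𝓝 x₀] (fun y => D y (EuclideanSpace.single i 1)) := by
    filter_upwards [hs.mem_nhds hx] with y hy
    rw [(hD y hy).fderiv]
  rw [hev.fderiv_eq, (hD₂ i).fderiv]
end dir
section cubes
variable {n : ℕ}

private lemma cube_isOpen (z : EuclideanSpace ℝ (Fin n)) (r : ℝ) :
    IsOpen {x : EuclideanSpace ℝ (Fin n) | ∀ i, |x i - z i| < r} := by
  have he : {x : EuclideanSpace ℝ (Fin n) | ∀ i, |x i - z i| < r}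
      = ⋂ i, {x : EuclideanSpace ℝ (Fin n) | |x i - z i| < r} := by
    ext x; simp [Set.mem_iInter]
  rw [he]
  refine isOpen_iInter_of_finite fun i => ?_
  have hc : Continuous fun x : EuclideanSpace ℝ (Fin n) => |x i - z i| :=
    (((EuclideanSpace.proj (𝕜 := ℝ) i).continuous).sub continuous_const).abs
  exact isOpen_lt hc continuous_const

private lemma cube_isCompact (z : EuclideanSpace ℝ (Fin n)) (r : ℝ) :
    IsCompact {x : EuclideanSpace ℝ (Fin n) | ∀ i, |x i - z i| ≤ r} := by
  refine IsCompact.of_isClosed_subset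
    (isCompact_closedBall z (Real.sqrt (n * r ^ 2))) ?_ ?_
  · have he : {x : EuclideanSpace ℝ (Fin n) | ∀ i, |x i - z i| ≤ r}
        = ⋂ i, {x : EuclideanSpace ℝ (Fin n) | |x i - z i| ≤ r} := by
      ext x; simp [Set.mem_iInter]
    rw [he]
    refine isClosed_iInter fun i => ?_
    have hc : Continuous fun x : EuclideanSpace ℝ (Fin n) => |x i - z i| :=
      (((EuclideanSpace.proj (𝕜 := ℝ) i).continuous).sub continuous_const).abs
    exact isClosed_le hc continuous_const
  · intro x hx
    rw [Metric.mem_closedBall, dist_eq_norm, EuclideanSpace.norm_eq]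
    apply Real.sqrt_le_sqrt
    have hb : ∀ i, ‖(x - z) i‖ ^ 2 ≤ r ^ 2 := by
      intro i
      have h1 : |x i - z i| ≤ r := hx i
      have h2 : (x - z) i = x i - z i := rfl
      rw [h2, Real.norm_eq_abs]
      have := abs_nonneg (x i - z i)
      nlinarith
    calc ∑ i, ‖(x - z) i‖ ^ 2 ≤ ∑ _i : Fin n, r ^ 2 := Finset.sum_le_sum fun i _ => hb i
      _ = n * r ^ 2 := by simp [Finset.sum_const, nsmul_eq_mul]

private lemma coord_hasFDerivAt (z : EuclideanSpace ℝ (Fin n)) (i : Fin n)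
    (x : EuclideanSpace ℝ (Fin n)) :
    HasFDerivAt (fun y : EuclideanSpace ℝ (Fin n) => y i - z i)
      (EuclideanSpace.proj (𝕜 := ℝ) i) x := by
  have := (EuclideanSpace.proj (𝕜 := ℝ) i :
      EuclideanSpace ℝ (Fin n) →L[ℝ] ℝ).hasFDerivAt (x := x) |>.sub_const (z i)
  simpa using this

private lemma sum_cube_le {ι : Type*} (s : Finset ι) (f : ι → ℝ) (hf : ∀ i ∈ s, 0 ≤ f i) :
    ∑ i ∈ s, (f i) ^ 3 ≤ (∑ i ∈ s, f i) ^ 3 := by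
  induction s using Finset.cons_induction with
  | empty => simp
  | cons a s ha ih =>
    rw [Finset.sum_cons, Finset.sum_cons]
    have h1 : 0 ≤ f a := hf a (Finset.mem_cons_self a s)
    have h2 : ∀ i ∈ s, 0 ≤ f i := fun i hi => hf i (Finset.mem_cons_of_mem hi)
    have h3 : (0:ℝ) ≤ ∑ i ∈ s, f i := Finset.sum_nonneg h2
    have h4 := ih h2
    nlinarith [mul_nonneg h1 h3, mul_nonneg (mul_nonneg h1 h1) h3,
      mul_nonneg (mul_nonneg h1 h3) h3]
end cubes

section oneD
private lemma hasDerivAt_g1 {h t : ℝ} (h1 : 0 < h - t) (h2 : 0 < h + t) :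
    HasDerivAt (fun s => Real.sqrt 2 * (h - s)⁻¹ + Real.sqrt 2 * (h + s)⁻¹)
      (Real.sqrt 2 * ((h - t) ^ 2)⁻¹ - Real.sqrt 2 * ((h + t) ^ 2)⁻¹) t := by
  have hA : HasDerivAt (fun s : ℝ => h - s) (-1) t := (hasDerivAt_id t).const_sub h
  have hB : HasDerivAt (fun s : ℝ => h + s) 1 t := (hasDerivAt_id t).const_add h
  have hA' := (hA.inv h1.ne').const_mul (Real.sqrt 2)
  have hB' := (hB.inv h2.ne').const_mul (Real.sqrt 2)
  refine (hA'.add hB').congr_deriv ?_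
  field_simp
  ring

private lemma hasDerivAt_g2 {h t : ℝ} (h1 : 0 < h - t) (h2 : 0 < h + t) :
    HasDerivAt (fun s => Real.sqrt 2 * ((h - s) ^ 2)⁻¹ - Real.sqrt 2 * ((h + s) ^ 2)⁻¹)
      (2 * Real.sqrt 2 * ((h - t) ^ 3)⁻¹ + 2 * Real.sqrt 2 * ((h + t) ^ 3)⁻¹) t := by
  have hA : HasDerivAt (fun s : ℝ => h - s) (-1) t := (hasDerivAt_id t).const_sub h
  have hB : HasDerivAt (fun s : ℝ => h + s) 1 t := (hasDerivAt_id t).const_add h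
  have hA2 := hA.pow 2
  have hB2 := hB.pow 2
  have hA' := (hA2.inv (pow_ne_zero 2 h1.ne')).const_mul (Real.sqrt 2)
  have hB' := (hB2.inv (pow_ne_zero 2 h2.ne')).const_mul (Real.sqrt 2)
  refine (hA'.sub hB').congr_deriv ?_
  simp only [Pi.pow_apply]
  field_simp
  ring
end oneD

section upper
variable {n : ℕ}

set_option maxHeartbeats 1000000 in
private lemma upper_bound (v : EuclideanSpace ℝ (Fin n) → ℝ)
    (hC2 : ContDiff ℝ 2 v)
    (heq' : ∀ x, euclLaplacian v x = v x ^ 3 - v x)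
    (z : EuclideanSpace ℝ (Fin n)) : v z ≤ 1 := by
  classical
  have hF : ∀ y, HasFDerivAt v (fderiv ℝ v y) y := fun y =>
    (hC2.differentiable two_ne_zero y).hasFDerivAt
  have hF1 : ContDiff ℝ 1 (fderiv ℝ v) := hC2.fderiv_right (by norm_num)
  have hFd : Differentiable ℝ (fderiv ℝ v) := hF1.differentiable one_ne_zero
  have hv2 : ∀ (x₀ : EuclideanSpace ℝ (Fin n)) (i : Fin n),
      HasFDerivAt (fun y => fderiv ℝ v y (EuclideanSpace.single i 1))
        (fderiv ℝ (fun y => fderiv ℝ v y (EuclideanSpace.single i 1)) x₀) x₀ :=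
    fun x₀ i => ((hFd x₀).clm_apply (differentiableAt_const _)).hasFDerivAt
  have hs2 : 0 < Real.sqrt 2 := Real.sqrt_pos.2 (by norm_num)
  have hsq2 : Real.sqrt 2 ^ 2 = 2 := Real.sq_sqrt (by norm_num)
  suffices hsuff : ∀ h : ℝ, 0 < h → v z ≤ 1 + 2 * Real.sqrt 2 * n / h by
    by_contra hgt
    push_neg at hgt
    have hε : 0 < v z - 1 := by linarith
    have hden : 0 < 2 * Real.sqrt 2 * n + 1 := by positivity
    have hh : 0 < (2 * Real.sqrt 2 * n + 1) / (v z - 1) := div_pos hden hε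
    have hkey : 2 * Real.sqrt 2 * n / ((2 * Real.sqrt 2 * n + 1) / (v z - 1)) < v z - 1 := by
      rw [div_div_eq_mul_div, div_lt_iff₀ hden]
      nlinarith [mul_nonneg (mul_nonneg (by norm_num : (0:ℝ) ≤ 2) hs2.le) (Nat.cast_nonneg n)]
    have := hsuff _ hh
    linarith
  intro h hh
  set Q : Set (EuclideanSpace ℝ (Fin n)) := {x | ∀ i, |x i - z i| < h} with hQdef
  have hQo : IsOpen Q := cube_isOpen z h
  have hzQ : z ∈ Q := by intro i; simpa using hh
  have hQab : ∀ {x : EuclideanSpace ℝ (Fin n)}, x ∈ Q → ∀ i,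
      0 < h - (x i - z i) ∧ 0 < h + (x i - z i) := by
    intro x hx i
    have := abs_lt.1 (hx i)
    constructor <;> linarith [this.1, this.2]
  set ψ : EuclideanSpace ℝ (Fin n) → ℝ := fun x =>
    1 + ∑ i, (Real.sqrt 2 * (h - (x i - z i))⁻¹ + Real.sqrt 2 * (h + (x i - z i))⁻¹)
    with hψdef
  set Dψ : EuclideanSpace ℝ (Fin n) → (EuclideanSpace ℝ (Fin n) →L[ℝ] ℝ) := fun x =>
    ∑ i, (Real.sqrt 2 * ((h - (x i - z i)) ^ 2)⁻¹
      - Real.sqrt 2 * ((h + (x i - z i)) ^ 2)⁻¹) • EuclideanSpace.proj (𝕜 := ℝ) i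
    with hDψdef
  have hψd : ∀ x ∈ Q, HasFDerivAt ψ (Dψ x) x := by
    intro x hx
    apply HasFDerivAt.const_add
    apply HasFDerivAt.fun_sum
    intro i _
    exact (hasDerivAt_g1 (hQab hx i).1 (hQab hx i).2).comp_hasFDerivAt x
      (coord_hasFDerivAt z i x)
  have hterm_nonneg : ∀ {x}, x ∈ Q → ∀ i,
      0 ≤ Real.sqrt 2 * (h - (x i - z i))⁻¹ + Real.sqrt 2 * (h + (x i - z i))⁻¹ := by
    intro x hx i
    have h1 := (hQab hx i).1
    have h2 := (hQab hx i).2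
    positivity
  have hψ_ge_one : ∀ {x}, x ∈ Q → 1 ≤ ψ x := by
    intro x hx
    simp only [hψdef]
    have := Finset.sum_nonneg (fun i (_ : i ∈ Finset.univ) => hterm_nonneg hx i)
    linarith
  have hWd : ∀ x ∈ Q, HasFDerivAt (fun y => v y - ψ y) (fderiv ℝ v x - Dψ x) x :=
    fun x hx => (hF x).sub (hψd x hx)
  obtain ⟨xM, hxM, hxMmax⟩ := (cube_isCompact z h).exists_isMaxOn
    ⟨z, fun i => by simpa using hh.le⟩ (hC2.continuous.continuousOn)
  set M := v xM with hMdef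
  set c := v z - ψ z with hcdef
  have hcM : c < M := by
    have h1 : 1 ≤ ψ z := hψ_ge_one hzQ
    have h2 : v z ≤ M := hxMmax (fun i => by simpa using hh.le)
    simp only [hcdef]
    linarith
  set δ := min (h / 2) (Real.sqrt 2 / (M - c + 1)) with hδdef
  have hMc1 : 0 < M - c + 1 := by linarith
  have hδpos : 0 < δ := lt_min (by linarith) (by positivity)
  have hδh : δ ≤ h / 2 := min_le_left _ _
  have hδ2 : δ ≤ Real.sqrt 2 / (M - c + 1) := min_le_right _ _
  have hδinv : M - c + 1 ≤ Real.sqrt 2 * δ⁻¹ := by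
    have h1 : δ * (M - c + 1) ≤ Real.sqrt 2 := by
      rw [← le_div_iff₀ hMc1]; exact hδ2
    rw [← div_eq_mul_inv, le_div_iff₀ hδpos]
    linarith
  -- points of Q outside the closed cube of radius h - δ have v - ψ < c
  have hout : ∀ x ∈ Q, x ∉ {y : EuclideanSpace ℝ (Fin n) | ∀ i, |y i - z i| ≤ h - δ} →
      v x - ψ x < c := by
    intro x hx hnot
    simp only [Set.mem_setOf_eq, not_forall, not_le] at hnot
    obtain ⟨i, hi⟩ := hnot
    have hA := (hQab hx i).1
    have hB := (hQab hx i).2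
    have hbig : Real.sqrt 2 * δ⁻¹
        ≤ Real.sqrt 2 * (h - (x i - z i))⁻¹ + Real.sqrt 2 * (h + (x i - z i))⁻¹ := by
      rcases le_or_gt 0 (x i - z i) with hc0 | hc0
      · have h1 : h - (x i - z i) < δ := by
          have h2 := abs_of_nonneg hc0
          linarith [hi, h2.symm.le]
        have h2 : δ⁻¹ ≤ (h - (x i - z i))⁻¹ := le_of_lt ((inv_lt_inv₀ hδpos hA).2 h1)
        have h3 : 0 ≤ Real.sqrt 2 * (h + (x i - z i))⁻¹ :=
          mul_nonneg hs2.le (inv_nonneg.2 hB.le)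
        have h4 := mul_le_mul_of_nonneg_left h2 hs2.le
        linarith
      · have h1 : h + (x i - z i) < δ := by
          have h2 := abs_of_neg hc0
          linarith [hi]
        have h2 : δ⁻¹ ≤ (h + (x i - z i))⁻¹ := le_of_lt ((inv_lt_inv₀ hδpos hB).2 h1)
        have h3 : 0 ≤ Real.sqrt 2 * (h - (x i - z i))⁻¹ :=
          mul_nonneg hs2.le (inv_nonneg.2 hA.le)
        have h4 := mul_le_mul_of_nonneg_left h2 hs2.le
        linarith
    have hsum : Real.sqrt 2 * δ⁻¹ ≤ ∑ j, (Real.sqrt 2 * (h - (x j - z j))⁻¹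
        + Real.sqrt 2 * (h + (x j - z j))⁻¹) :=
      le_trans hbig (Finset.single_le_sum (fun j (_ : j ∈ Finset.univ) => hterm_nonneg hx j)
        (Finset.mem_univ i))
    have hψbig : M - c + 2 ≤ ψ x := by
      simp only [hψdef]
      linarith
    have hvM : v x ≤ M := hxMmax (fun j => (hx j).le)
    linarith
  -- maximize v - ψ on the compact cube of radius h - δ
  have hsub : {y : EuclideanSpace ℝ (Fin n) | ∀ i, |y i - z i| ≤ h - δ} ⊆ Q := by
    intro x hx i
    exact lt_of_le_of_lt (hx i) (by linarith)
  have hzm : z ∈ {y : EuclideanSpace ℝ (Fin n) | ∀ i, |y i - z i| ≤ h - δ} := by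
    intro i; simpa using by linarith
  obtain ⟨x₀, hx₀m, hx₀max⟩ := (cube_isCompact z (h - δ)).exists_isMaxOn
    ⟨z, hzm⟩
    (fun x hx => ((hWd x (hsub hx)).differentiableAt.continuousAt).continuousWithinAt)
  have hx₀Q : x₀ ∈ Q := hsub hx₀m
  have hglob : ∀ x ∈ Q, v x - ψ x ≤ v x₀ - ψ x₀ := by
    intro x hx
    by_cases hmem : x ∈ {y : EuclideanSpace ℝ (Fin n) | ∀ i, |y i - z i| ≤ h - δ}
    · exact hx₀max hmem
    · have h1 := hout x hx hmem
      have h2 : c ≤ v x₀ - ψ x₀ := hx₀max hzm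
      linarith
  have hlocmax : IsLocalMax (fun y => v y - ψ y) x₀ := by
    filter_upwards [hQo.mem_nhds hx₀Q] with y hy using hglob y hy
  have hψ2 : ∀ i : Fin n, HasFDerivAt (fun y => Dψ y (EuclideanSpace.single i 1))
      ((2 * Real.sqrt 2 * ((h - (x₀ i - z i)) ^ 3)⁻¹
        + 2 * Real.sqrt 2 * ((h + (x₀ i - z i)) ^ 3)⁻¹)
        • EuclideanSpace.proj (𝕜 := ℝ) i) x₀ := by
    intro i
    have hfun : (fun y => Dψ y (EuclideanSpace.single i 1))
        = fun y => Real.sqrt 2 * ((h - (y i - z i)) ^ 2)⁻¹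
          - Real.sqrt 2 * ((h + (y i - z i)) ^ 2)⁻¹ := by
      funext y
      simp only [hDψdef, ContinuousLinearMap.sum_apply, ContinuousLinearMap.smul_apply,
        PiLp.proj_apply, EuclideanSpace.single_apply, smul_eq_mul,
        mul_ite, mul_one, mul_zero, Finset.sum_ite_eq', Finset.mem_univ, if_true]
    rw [hfun]
    exact (hasDerivAt_g2 (hQab hx₀Q i).1 (hQab hx₀Q i).2).comp_hasFDerivAt x₀
      (coord_hasFDerivAt z i x₀)
  have hkey : ∀ i : Fin n,
      (fderiv ℝ (fun y => fderiv ℝ v y (EuclideanSpace.single i 1)) x₀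
        - (2 * Real.sqrt 2 * ((h - (x₀ i - z i)) ^ 3)⁻¹
          + 2 * Real.sqrt 2 * ((h + (x₀ i - z i)) ^ 3)⁻¹)
            • EuclideanSpace.proj (𝕜 := ℝ) i)
        (EuclideanSpace.single i 1) ≤ 0 := by
    intro i
    refine dir2_nonpos hQo hx₀Q hWd ?_ hlocmax
    have hfun : (fun y => (fderiv ℝ v y - Dψ y) (EuclideanSpace.single i 1))
        = fun y => fderiv ℝ v y (EuclideanSpace.single i 1)
            - Dψ y (EuclideanSpace.single i 1) := by
      funext y; simp [ContinuousLinearMap.sub_apply]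
    show HasFDerivAt (fun y => (fderiv ℝ v y - Dψ y) (EuclideanSpace.single i 1)) _ x₀
    rw [hfun]
    exact (hv2 x₀ i).sub (hψ2 i)
  have hlap : euclLaplacian v x₀ = ∑ i, fderiv ℝ
      (fun y => fderiv ℝ v y (EuclideanSpace.single i 1)) x₀ (EuclideanSpace.single i 1) :=
    euclLaplacian_eq isOpen_univ (Set.mem_univ _) (fun y _ => hF y) (fun i => hv2 x₀ i)
  have hsum2 : euclLaplacian v x₀ ≤ ∑ i, (2 * Real.sqrt 2 * ((h - (x₀ i - z i)) ^ 3)⁻¹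
      + 2 * Real.sqrt 2 * ((h + (x₀ i - z i)) ^ 3)⁻¹) := by
    rw [hlap]
    refine Finset.sum_le_sum fun i _ => ?_
    have h2 := hkey i
    have h3 : (EuclideanSpace.proj (𝕜 := ℝ) i : EuclideanSpace ℝ (Fin n) →L[ℝ] ℝ)
        (EuclideanSpace.single i 1) = 1 := by
      simp [PiLp.proj_apply, EuclideanSpace.single_apply]
    simp only [ContinuousLinearMap.sub_apply, ContinuousLinearMap.smul_apply,
      h3, smul_eq_mul, mul_one] at h2
    linarith
  have hScube : ∑ i, (2 * Real.sqrt 2 * ((h - (x₀ i - z i)) ^ 3)⁻¹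
      + 2 * Real.sqrt 2 * ((h + (x₀ i - z i)) ^ 3)⁻¹)
      ≤ (∑ i, (Real.sqrt 2 * (h - (x₀ i - z i))⁻¹
        + Real.sqrt 2 * (h + (x₀ i - z i))⁻¹)) ^ 3 := by
    refine le_trans (Finset.sum_le_sum fun i _ => ?_)
      (sum_cube_le _ _ fun i _ => hterm_nonneg hx₀Q i)
    have ha := (hQab hx₀Q i).1
    have hb := (hQab hx₀Q i).2
    have hia : 0 < (h - (x₀ i - z i))⁻¹ := inv_pos.2 ha
    have hib : 0 < (h + (x₀ i - z i))⁻¹ := inv_pos.2 hb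
    have hs3 : Real.sqrt 2 ^ 3 = 2 * Real.sqrt 2 := by
      rw [pow_succ, hsq2]
    have expand : (Real.sqrt 2 * (h - (x₀ i - z i))⁻¹ + Real.sqrt 2 * (h + (x₀ i - z i))⁻¹) ^ 3
        = Real.sqrt 2 ^ 3 * ((h - (x₀ i - z i))⁻¹ + (h + (x₀ i - z i))⁻¹) ^ 3 := by ring
    rw [← inv_pow, ← inv_pow, expand, hs3]
    nlinarith [mul_nonneg (mul_nonneg hs2.le (mul_nonneg hia.le hia.le)) hib.le,
      mul_nonneg (mul_nonneg hs2.le (mul_nonneg hia.le hib.le)) hib.le]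
  have hS0 : 0 ≤ ∑ i, (Real.sqrt 2 * (h - (x₀ i - z i))⁻¹
      + Real.sqrt 2 * (h + (x₀ i - z i))⁻¹) :=
    Finset.sum_nonneg fun i _ => hterm_nonneg hx₀Q i
  have hPP : (∑ i, (Real.sqrt 2 * (h - (x₀ i - z i))⁻¹
      + Real.sqrt 2 * (h + (x₀ i - z i))⁻¹)) ^ 3 ≤ ψ x₀ ^ 3 - ψ x₀ := by
    simp only [hψdef]
    nlinarith [hS0, sq_nonneg (∑ i, (Real.sqrt 2 * (h - (x₀ i - z i))⁻¹
      + Real.sqrt 2 * (h + (x₀ i - z i))⁻¹))]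
  have hchain : v x₀ ^ 3 - v x₀ ≤ ψ x₀ ^ 3 - ψ x₀ := by
    rw [← heq' x₀]
    exact le_trans hsum2 (le_trans hScube hPP)
  have hW0 : v x₀ - ψ x₀ ≤ 0 := by
    by_contra hcon
    push_neg at hcon
    have hUP : ψ x₀ < v x₀ := by linarith
    have hP1 : 1 ≤ ψ x₀ := hψ_ge_one hx₀Q
    have hU1 : 1 < v x₀ := lt_of_le_of_lt hP1 hUP
    have hquad : 0 < v x₀ ^ 2 + v x₀ * ψ x₀ + ψ x₀ ^ 2 - 1 := by
      nlinarith [mul_pos (lt_trans zero_lt_one hU1) (lt_of_lt_of_le zero_lt_one hP1)]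
    nlinarith [mul_pos (sub_pos.2 hUP) hquad]
  have hfinal : v z - ψ z ≤ 0 := le_trans (hglob z hzQ) hW0
  have hψz : ψ z = 1 + n * (2 * Real.sqrt 2 / h) := by
    simp only [hψdef, sub_self, sub_zero, add_zero]
    rw [Finset.sum_const, Finset.card_univ, Fintype.card_fin, nsmul_eq_mul]
    rw [div_eq_mul_inv]
    ring
  have harith : (n : ℝ) * (2 * Real.sqrt 2 / h) = 2 * Real.sqrt 2 * n / h := by ring
  rw [hψz, harith] at hfinal
  linarith
end upper

section lower
variable {n : ℕ}

set_option maxHeartbeats 1000000 in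
private lemma lower_bound (v : EuclideanSpace ℝ (Fin n) → ℝ)
    (hpos : ∀ x, 0 < v x)
    (hC2 : ContDiff ℝ 2 v)
    (heq' : ∀ x, euclLaplacian v x = v x ^ 3 - v x)
    (z : EuclideanSpace ℝ (Fin n)) : 1 ≤ v z := by
  classical
  have hF : ∀ y, HasFDerivAt v (fderiv ℝ v y) y := fun y =>
    (hC2.differentiable two_ne_zero y).hasFDerivAt
  have hF1 : ContDiff ℝ 1 (fderiv ℝ v) := hC2.fderiv_right (by norm_num)
  have hFd : Differentiable ℝ (fderiv ℝ v) := hF1.differentiable one_ne_zero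
  have hv2 : ∀ (x₀ : EuclideanSpace ℝ (Fin n)) (i : Fin n),
      HasFDerivAt (fun y => fderiv ℝ v y (EuclideanSpace.single i 1))
        (fderiv ℝ (fun y => fderiv ℝ v y (EuclideanSpace.single i 1)) x₀) x₀ :=
    fun x₀ i => ((hFd x₀).clm_apply (differentiableAt_const _)).hasFDerivAt
  suffices hsuff : ∀ a : ℝ, 0 < a → 1 - n * a ^ 2 ≤ v z ^ 2 by
    by_contra hlt
    push_neg at hlt
    have hvz := hpos z
    have hsq : 0 < 1 - v z ^ 2 := by nlinarith
    set a := Real.sqrt ((1 - v z ^ 2) / (2 * (n + 1))) with hadef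
    have hden : (0:ℝ) < 2 * ((n:ℝ) + 1) := by positivity
    have hfrac : 0 < (1 - v z ^ 2) / (2 * ((n:ℝ) + 1)) := div_pos hsq hden
    have hapos : 0 < a := Real.sqrt_pos.2 hfrac
    have ha2 : a ^ 2 = (1 - v z ^ 2) / (2 * ((n:ℝ) + 1)) := Real.sq_sqrt hfrac.le
    have := hsuff a hapos
    rw [ha2] at this
    have hnn : (0:ℝ) ≤ (n:ℝ) := Nat.cast_nonneg n
    have hkey : (n:ℝ) * ((1 - v z ^ 2) / (2 * ((n:ℝ) + 1))) < 1 - v z ^ 2 := by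
      rw [mul_div_assoc']
      rw [div_lt_iff₀ hden]
      nlinarith
    linarith
  intro a ha
  have hpi := Real.pi_pos
  set h := Real.pi / (2 * a) with hhdef
  have hh : 0 < h := by positivity
  have hah : a * h = Real.pi / 2 := by
    rw [hhdef]
    field_simp
  set C : Set (EuclideanSpace ℝ (Fin n)) := {x | ∀ i, |x i - z i| ≤ h} with hCdef
  set Q : Set (EuclideanSpace ℝ (Fin n)) := {x | ∀ i, |x i - z i| < h} with hQdef
  have hQo : IsOpen Q := cube_isOpen z h
  have hQC : Q ⊆ C := fun x hx i => (hx i).le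
  set φ : EuclideanSpace ℝ (Fin n) → ℝ := fun x => ∏ i, Real.cos (a * (x i - z i)) with hφdef
  have hφcont : Continuous φ := by
    apply continuous_finset_prod
    intro i _
    exact Real.continuous_cos.comp (continuous_const.mul
      (((EuclideanSpace.proj (𝕜 := ℝ) i).continuous).sub continuous_const))
  have hzC : z ∈ C := fun i => by simpa using hh.le
  have hφz : φ z = 1 := by simp [hφdef]
  obtain ⟨x₀, hx₀C, hx₀max⟩ := (cube_isCompact z h).exists_isMaxOn ⟨z, hzC⟩
    ((hφcont.div hC2.continuous (fun x => (hpos x).ne')).continuousOn)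
  set T := φ x₀ / v x₀ with hTdef
  have hTz : 1 / v z ≤ T := by
    have := hx₀max hzC
    simpa [hφz] using this
  have hT : 0 < T := lt_of_lt_of_le (one_div_pos.2 (hpos z)) hTz
  -- x₀ is interior
  have hx₀Q : x₀ ∈ Q := by
    intro i
    rcases lt_or_eq_of_le (hx₀C i) with hlt | heqi
    · exact hlt
    · exfalso
      have hcos0 : Real.cos (a * (x₀ i - z i)) = 0 := by
        rcases abs_eq hh.le |>.1 heqi with h1 | h1
        · rw [h1, hah, Real.cos_pi_div_two]
        · rw [h1]
          rw [mul_neg, hah, Real.cos_neg, Real.cos_pi_div_two]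
      have hφ0 : φ x₀ = 0 := by
        simp only [hφdef]
        exact Finset.prod_eq_zero (Finset.mem_univ i) hcos0
      rw [hTdef, hφ0, zero_div] at hT
      exact lt_irrefl 0 hT
  have hQab : ∀ {x : EuclideanSpace ℝ (Fin n)}, x ∈ C → ∀ i,
      0 ≤ Real.cos (a * (x i - z i)) := by
    intro x hx i
    apply Real.cos_nonneg_of_mem_Icc
    have h1 : |x i - z i| ≤ h := hx i
    have h2 : |a * (x i - z i)| ≤ a * h := by
      rw [abs_mul, abs_of_pos ha]
      exact mul_le_mul_of_nonneg_left h1 ha.le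
    rw [hah] at h2
    have := abs_le.1 h2
    constructor <;> linarith [this.1, this.2]
  have hφle1 : ∀ {x}, x ∈ C → φ x ≤ 1 := by
    intro x hx
    simp only [hφdef]
    apply Finset.prod_le_one
    · exact fun i _ => hQab hx i
    · exact fun i _ => Real.cos_le_one _
  -- w = T * v - φ has a local min at x₀
  have hφx₀ : φ x₀ = T * v x₀ := by
    rw [hTdef, div_mul_cancel₀]
    exact (hpos x₀).ne'
  have hwmin : IsLocalMin (fun x => T * v x - φ x) x₀ := by
    have hle : ∀ x ∈ Q, T * v x₀ - φ x₀ ≤ T * v x - φ x := by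
      intro x hx
      have h1 : φ x / v x ≤ T := hx₀max (hQC hx)
      have h2 : φ x ≤ T * v x := (div_le_iff₀ (hpos x)).1 h1
      rw [← hφx₀]
      simp only [hφx₀]
      linarith
    have : ∀ᶠ x in nhds x₀, T * v x₀ - φ x₀ ≤ T * v x - φ x := by
      filter_upwards [hQo.mem_nhds hx₀Q] with x hx using hle x hx
    exact this
  -- derivative data for φ
  have hcosd : ∀ (x : EuclideanSpace ℝ (Fin n)) (i : Fin n),
      HasFDerivAt (fun y : EuclideanSpace ℝ (Fin n) => Real.cos (a * (y i - z i)))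
        ((-Real.sin (a * (x i - z i))) • ((a : ℝ) • EuclideanSpace.proj (𝕜 := ℝ) i)) x :=
    fun x i => ((coord_hasFDerivAt z i x).const_mul a).cos
  set Dφ : EuclideanSpace ℝ (Fin n) → (EuclideanSpace ℝ (Fin n) →L[ℝ] ℝ) := fun x =>
    ∑ i, (∏ j ∈ Finset.univ.erase i, Real.cos (a * (x j - z j)))
      • ((-Real.sin (a * (x i - z i))) • ((a : ℝ) • EuclideanSpace.proj (𝕜 := ℝ) i))
    with hDφdef
  have hφd : ∀ x, HasFDerivAt φ (Dφ x) x := by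
    intro x
    exact HasFDerivAt.finset_prod (fun i _ => hcosd x i)
  have hwd : ∀ x, HasFDerivAt (fun y => T * v y - φ y)
      (T • fderiv ℝ v x - Dφ x) x :=
    fun x => ((hF x).const_mul T).sub (hφd x)
  -- second derivative data for φ along coordinate k at x₀
  have main : ∀ k : Fin n,
      0 ≤ T * (fderiv ℝ (fun y => fderiv ℝ v y (EuclideanSpace.single k 1)) x₀
          (EuclideanSpace.single k 1)) + a ^ 2 * φ x₀ := by
    intro k
    set Pk : EuclideanSpace ℝ (Fin n) → ℝ :=
      fun y => ∏ j ∈ Finset.univ.erase k, Real.cos (a * (y j - z j)) with hPkdef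
    set Sk : EuclideanSpace ℝ (Fin n) → ℝ :=
      fun y => -Real.sin (a * (y k - z k)) * a with hSkdef
    set DSk : EuclideanSpace ℝ (Fin n) →L[ℝ] ℝ :=
      (a : ℝ) • (-(Real.cos (a * (x₀ k - z k))
        • ((a : ℝ) • EuclideanSpace.proj (𝕜 := ℝ) k))) with hDSkdef
    set DPk : EuclideanSpace ℝ (Fin n) →L[ℝ] ℝ :=
      ∑ j ∈ Finset.univ.erase k,
        (∏ l ∈ (Finset.univ.erase k).erase j, Real.cos (a * (x₀ l - z l)))
          • ((-Real.sin (a * (x₀ j - z j))) • ((a : ℝ) • EuclideanSpace.proj (𝕜 := ℝ) j))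
      with hDPkdef
    have hfunk : (fun y => Dφ y (EuclideanSpace.single k 1)) = fun y => Pk y * Sk y := by
      funext y
      simp only [hDφdef, hPkdef, hSkdef, ContinuousLinearMap.sum_apply,
        ContinuousLinearMap.smul_apply, PiLp.proj_apply, EuclideanSpace.single_apply,
        smul_eq_mul, mul_ite, mul_one, mul_zero, Finset.sum_ite_eq', Finset.mem_univ, if_true]
      try ring
    have hPkd : HasFDerivAt Pk DPk x₀ :=
      HasFDerivAt.finset_prod (fun j _ => hcosd x₀ j)
    have hSkd : HasFDerivAt Sk DSk x₀ :=
      (((coord_hasFDerivAt z k x₀).const_mul a).sin.neg).mul_const a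
    have hPS := hPkd.mul hSkd
    have hfun2 : (fun y => (T • fderiv ℝ v y - Dφ y) (EuclideanSpace.single k 1))
        = fun y => T * fderiv ℝ v y (EuclideanSpace.single k 1) - Pk y * Sk y := by
      funext y
      simp only [ContinuousLinearMap.sub_apply, ContinuousLinearMap.smul_apply, smul_eq_mul]
      rw [congrFun hfunk y]
    have hD2 : HasFDerivAt (fun y => (T • fderiv ℝ v y - Dφ y) (EuclideanSpace.single k 1))
        (T • (fderiv ℝ (fun y => fderiv ℝ v y (EuclideanSpace.single k 1)) x₀)
          - (Pk x₀ • DSk + Sk x₀ • DPk)) x₀ := by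
      rw [hfun2]
      exact ((hv2 x₀ k).const_mul T).sub hPS
    have hnn := dir2_nonneg isOpen_univ (Set.mem_univ x₀) (fun y _ => hwd y) hD2 hwmin
    have hval : (T • (fderiv ℝ (fun y => fderiv ℝ v y (EuclideanSpace.single k 1)) x₀)
          - (Pk x₀ • DSk + Sk x₀ • DPk)) (EuclideanSpace.single k 1)
        = T * (fderiv ℝ (fun y => fderiv ℝ v y (EuclideanSpace.single k 1)) x₀
            (EuclideanSpace.single k 1))
          + a ^ 2 * (Pk x₀ * Real.cos (a * (x₀ k - z k))) := by
      simp only [hDSkdef, hDPkdef, ContinuousLinearMap.sub_apply,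
        ContinuousLinearMap.add_apply, ContinuousLinearMap.smul_apply,
        ContinuousLinearMap.neg_apply, ContinuousLinearMap.sum_apply,
        PiLp.proj_apply, EuclideanSpace.single_apply, smul_eq_mul,
        mul_ite, mul_one, mul_zero, Finset.sum_ite_eq', Finset.notMem_erase, if_false,
        eq_self_iff_true, if_true]
      ring
    rw [hval] at hnn
    have hprodφ : Pk x₀ * Real.cos (a * (x₀ k - z k)) = φ x₀ := by
      simp only [hPkdef, hφdef]
      exact Finset.prod_erase_mul Finset.univ _ (Finset.mem_univ k)
    rw [hprodφ] at hnn
    exact hnn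
  -- sum over k
  have hlap : euclLaplacian v x₀ = ∑ i, fderiv ℝ
      (fun y => fderiv ℝ v y (EuclideanSpace.single i 1)) x₀ (EuclideanSpace.single i 1) :=
    euclLaplacian_eq isOpen_univ (Set.mem_univ _) (fun y _ => hF y) (fun i => hv2 x₀ i)
  have hsum : 0 ≤ T * euclLaplacian v x₀ + n * (a ^ 2 * φ x₀) := by
    have h1 : 0 ≤ ∑ k, (T * (fderiv ℝ (fun y => fderiv ℝ v y (EuclideanSpace.single k 1)) x₀
        (EuclideanSpace.single k 1)) + a ^ 2 * φ x₀) :=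
      Finset.sum_nonneg fun k _ => main k
    rw [Finset.sum_add_distrib, ← Finset.mul_sum, Finset.sum_const, Finset.card_univ,
      Fintype.card_fin, nsmul_eq_mul] at h1
    rw [hlap]
    linarith
  -- conclude
  have hU := hpos x₀
  have hUcube : 0 ≤ T * (v x₀ ^ 3 - v x₀ + (n : ℝ) * a ^ 2 * v x₀) := by
    have := heq' x₀
    rw [this] at hsum
    rw [hφx₀] at hsum
    nlinarith [hsum]
  have hU2 : 1 - (n : ℝ) * a ^ 2 ≤ v x₀ ^ 2 := by
    by_contra hcon
    push_neg at hcon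
    have h2 : v x₀ ^ 3 - v x₀ + (n : ℝ) * a ^ 2 * v x₀ < 0 := by nlinarith
    nlinarith [mul_pos hT (show 0 < -(v x₀ ^ 3 - v x₀ + (n : ℝ) * a ^ 2 * v x₀) by linarith)]
  have hUvz : v x₀ ≤ v z := by
    have h1 : T * v x₀ ≤ 1 := by rw [← hφx₀]; exact hφle1 hx₀C
    have h2 : 1 ≤ T * v z := (div_le_iff₀ (hpos z)).1 hTz
    have h3 : T * v x₀ ≤ T * v z := le_trans h1 h2
    exact le_of_mul_le_mul_left h3 hT
  nlinarith [hU2, hUvz, hU.le]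
end lower


/-- Liouville theorem for the Allen–Cahn equation `Δv + v - v³ = 0` in Euclidean
space `ℝⁿ`, `n ≥ 2`: every positive `C²` solution is identically `1`. -/
theorem allen_cahn_euclidean_liouville
    (n : ℕ) (hn : 2 ≤ n) (v : EuclideanSpace ℝ (Fin n) → ℝ)
    (hpos : ∀ x, 0 < v x) (hC2 : ContDiff ℝ 2 v)
    (heq : ∀ x, euclLaplacian v x + v x - (v x) ^ 3 = 0) :
    ∀ x, v x = 1 := by
  have heq' : ∀ x, euclLaplacian v x = v x ^ 3 - v x := fun x => by linarith [heq x]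
  intro x
  exact le_antisymm (upper_bound v hC2 heq' x) (lower_bound v hpos hC2 heq' x)
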